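/- Let (X, 𝒜, μ) be a measure space and f, g measurable functions. The sum of principal ideals ⟨f⟩ + ⟨g⟩ contains a μ-unit (a measurable function u with μ(Z(u)) = 0) and equals ⟨u⟩ for some μ-unit u if and only if μ(Z(f) ∩ Z(g)) = 0. -/

import Mathlib

open MeasureTheory Set

/-- The ring of real-valued measurable functions on `X`, as a subring of `X → ℝ`. -/
def MFunc (X : Type*) [MeasurableSpace X] : Subring (X → ℝ) where
  carrier := {f | Measurable f}
  mul_mem' hf hg := hf.mul hg
  one_mem' := measurable_one
  add_mem' hf hg := hf.add hg
  zero_mem' := measurable_zero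
  neg_mem' hf := hf.neg

theorem span_sup_span_eq_span_unit_iff {X : Type*} [MeasurableSpace X]
    (μ : Measure X) (f g : MFunc X) :
    (∃ u : MFunc X, μ {x | (u : X → ℝ) x = 0} = 0 ∧
        Ideal.span {f} ⊔ Ideal.span {g} = Ideal.span {u}) ↔
      μ ({x | (f : X → ℝ) x = 0} ∩ {x | (g : X → ℝ) x = 0}) = 0 := by
  constructor
  · rintro ⟨u, hu0, hspan⟩
    have hu : (u : MFunc X) ∈ Ideal.span {f} ⊔ Ideal.span {g} := by
      rw [hspan]; exact Ideal.subset_span rfl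
    rcases Submodule.mem_sup.mp hu with ⟨a, ha, b, hb, hab⟩
    rcases Ideal.mem_span_singleton'.mp ha with ⟨c, rfl⟩
    rcases Ideal.mem_span_singleton'.mp hb with ⟨d, rfl⟩
    refine measure_mono_null ?_ hu0
    rintro x ⟨hf, hg⟩
    simp only [mem_setOf_eq] at hf hg ⊢
    have := congrArg (fun v : MFunc X => (v : X → ℝ) x) hab
    rw [← this]
    show (c : X → ℝ) x * (f : X → ℝ) x + (d : X → ℝ) x * (g : X → ℝ) x = 0
    rw [hf, hg]; ring
  · intro h
    set u : MFunc X := f * f + g * g with hu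
    have hux : ∀ x, (u : X → ℝ) x = (f : X → ℝ) x ^ 2 + (g : X → ℝ) x ^ 2 := by
      intro x; show (f:X→ℝ) x * (f:X→ℝ) x + (g:X→ℝ) x * (g:X→ℝ) x = _; ring
    have hz : {x | (u : X → ℝ) x = 0} =
        {x | (f : X → ℝ) x = 0} ∩ {x | (g : X → ℝ) x = 0} := by
      ext x
      simp only [mem_setOf_eq, mem_inter_iff, hux x]
      constructor
      · intro hx
        have h1 : (f:X→ℝ) x ^ 2 = 0 ∧ (g:X→ℝ) x ^ 2 = 0 := by
          constructor <;> nlinarith [sq_nonneg ((f:X→ℝ) x), sq_nonneg ((g:X→ℝ) x)]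
        exact ⟨pow_eq_zero_iff (by norm_num) |>.mp h1.1,
          pow_eq_zero_iff (by norm_num) |>.mp h1.2⟩
      · rintro ⟨h1, h2⟩; rw [h1, h2]; ring
    refine ⟨u, by rw [hz]; exact h, ?_⟩
    have key : ∀ v : MFunc X, (∀ x, (u : X → ℝ) x = 0 → (v : X → ℝ) x = 0) →
        v ∈ Ideal.span ({u} : Set (MFunc X)) := by
      intro v hv
      rw [Ideal.mem_span_singleton']
      refine ⟨⟨fun x => (v : X → ℝ) x * ((u : X → ℝ) x)⁻¹, v.2.mul u.2.inv⟩, ?_⟩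
      apply Subtype.ext
      funext x
      show (v : X → ℝ) x * ((u : X → ℝ) x)⁻¹ * (u : X → ℝ) x = (v : X → ℝ) x
      by_cases hx : (u : X → ℝ) x = 0
      · rw [hx, hv x hx]; ring
      · field_simp
    apply le_antisymm
    · apply sup_le <;> rw [Ideal.span_le, Set.singleton_subset_iff]
      · exact key f (fun x hx => by
          have := hux x
          rw [hx] at this
          nlinarith [sq_nonneg ((f:X→ℝ) x), sq_nonneg ((g:X→ℝ) x)])
      · exact key g (fun x hx => by
          have := hux x
          rw [hx] at this
          nlinarith [sq_nonneg ((f:X→ℝ) x), sq_nonneg ((g:X→ℝ) x)])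
    · rw [Ideal.span_le, Set.singleton_subset_iff, hu]
      exact Submodule.add_mem _
        (Submodule.mem_sup_left (Ideal.mul_mem_left _ _ (Ideal.subset_span rfl)))
        (Submodule.mem_sup_right (Ideal.mul_mem_left _ _ (Ideal.subset_span rfl)))
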